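/- Let A^F denote the fully connected network (partition {{1,…,n}}) and A^I the islands network (partition into n singletons), and define W(A) := a_0^n ⋅ ( (I − A)^{-1} u(A) ) with u(A)_i = log λ_{ℓ(i)}(A_i) + b_{ℓ(i),0} log b_{ℓ(i),0} + Σ_{j∈M} A_{i,j} log A_{i,j}, where A_i denotes the i-th row of A. If every category's productivity function λ_ℓ has increasing returns to diversification, then W(A^F) ≥ W(A^I); if every λ_ℓ has decreasing returns to diversification, then W(A^I) ≥ W(A^F). -/

import Mathlib

/-!
Replicate economy with n countries and L categories; firms are pairs
(category, country) in `Fin L × Fin n`; a partition 𝒬 of the countries is a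
`Setoid (Fin n)`; `AQ B Q` is the 𝒬-clustered network A^𝒬. The fully
connected network A^F corresponds to the single-cluster partition
(`⊤ : Setoid (Fin n)`), the islands network A^I to the partition into
singletons (`⊥ : Setoid (Fin n)`).
λ̄(x) = ∏_j x_j^{−x_j} (with 0^0 = 1, via `Real.rpow`) is the Hicks-neutral
benchmark; increasing/decreasing returns to diversification are as in the
paper. u(A)_i = log λ_{ℓ(i)}(A_i) + b_{ℓ(i),0} log b_{ℓ(i),0}
+ Σ_j A_{i,j} log A_{i,j} and W(A) = a_0^n ⋅ ((I − A)⁻¹ u(A)).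

STATEMENT 12: increasing returns to diversification for every category imply
W(A^F) ≥ W(A^I); decreasing returns imply W(A^I) ≥ W(A^F).
-/

noncomputable section

open Matrix Finset

attribute [local instance] Classical.propDecidable

/-- Firms: (category, country). -/
abbrev Firm (L n : ℕ) := Fin L × Fin n

/-- Cardinality of the cluster (equivalence class) of country `c`. -/
def clusterCard {n : ℕ} (Q : Setoid (Fin n)) (c : Fin n) : ℕ :=
  (univ.filter fun c' => Q.r c c').card

/-- The 𝒬-clustered production network A^𝒬. -/
def AQ {L n : ℕ} (B : Fin L → Fin L → ℝ) (Q : Setoid (Fin n)) :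
    Matrix (Firm L n) (Firm L n) ℝ :=
  Matrix.of fun i j =>
    if i.1 = j.1 then (if i = j then B i.1 i.1 else 0)
    else if Q.r i.2 j.2 then B i.1 j.1 / (clusterCard Q i.2 : ℝ) else 0

/-- Household consumption shares on firms: a0 ℓ / n. -/
def a0n {L : ℕ} (n : ℕ) (a0 : Fin L → ℝ) : Firm L n → ℝ :=
  fun i => a0 i.1 / n

/-- Hicks-neutral benchmark productivity λ̄(x) = ∏_j x_j^{−x_j} (0^0 = 1). -/
def lamBar {L n : ℕ} (x : Firm L n → ℝ) : ℝ :=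
  ∏ j, x j ^ (-(x j))

/-- Increasing returns to diversification. -/
def IncRTD {L n : ℕ} (lam : (Firm L n → ℝ) → ℝ) : Prop :=
  ∀ x x' : Firm L n → ℝ, (∀ j, 0 ≤ x j) → (∀ j, 0 ≤ x' j) →
    lamBar x' ≤ lamBar x → lamBar x / lamBar x' ≤ lam x / lam x'

/-- Decreasing returns to diversification. -/
def DecRTD {L n : ℕ} (lam : (Firm L n → ℝ) → ℝ) : Prop :=
  ∀ x x' : Firm L n → ℝ, (∀ j, 0 ≤ x j) → (∀ j, 0 ≤ x' j) →
    lamBar x' ≤ lamBar x → lam x / lam x' ≤ lamBar x / lamBar x'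

/-- Entropy-corrected productivity vector u(A). -/
def uR {L n : ℕ} (lam : Fin L → (Firm L n → ℝ) → ℝ) (b0 : Fin L → ℝ)
    (A : Matrix (Firm L n) (Firm L n) ℝ) : Firm L n → ℝ :=
  fun i => Real.log (lam i.1 (A i)) + b0 i.1 * Real.log (b0 i.1)
    + ∑ j, A i j * Real.log (A i j)

/-- Welfare W(A) = a_0^n ⋅ ((I − A)⁻¹ u(A)). -/
def WR {L n : ℕ} (a0 b0 : Fin L → ℝ) (lam : Fin L → (Firm L n → ℝ) → ℝ)
    (A : Matrix (Firm L n) (Firm L n) ℝ) : ℝ :=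
  a0n n a0 ⬝ᵥ ((1 - A)⁻¹.mulVec (uR lam b0 A))


/-! ### Auxiliary lemmas -/

section Neumann
attribute [local instance] Matrix.linftyOpNormedAddCommGroup Matrix.linftyOpNormedRing

variable {ι : Type*} [Fintype ι] [DecidableEq ι]

lemma norm_lt_one_of_rows {M : Matrix ι ι ℝ} (h0 : ∀ i j, 0 ≤ M i j)
    (h1 : ∀ i, ∑ j, M i j < 1) : ‖M‖ < 1 := by
  rw [Matrix.linfty_opNorm_def]
  have : ((1:ℝ)) = ((1 : NNReal) : ℝ) := by norm_num
  rw [this, NNReal.coe_lt_coe]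
  refine Finset.sup_lt_iff (by norm_num) |>.2 fun i _ => ?_
  rw [← NNReal.coe_lt_coe]
  push_cast
  calc (∑ j, (‖M i j‖₊ : ℝ)) = ∑ j, M i j := by
        refine Finset.sum_congr rfl fun j _ => ?_
        simp [Real.nnnorm_of_nonneg (h0 i j)]
    _ < 1 := h1 i

lemma pow_entry_nonneg {M : Matrix ι ι ℝ} (h0 : ∀ i j, 0 ≤ M i j) :
    ∀ k i j, 0 ≤ (M ^ k) i j := by
  intro k
  induction k with
  | zero => intro i j; simp [Matrix.one_apply]; positivity
  | succ k ih =>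
    intro i j
    rw [pow_succ, Matrix.mul_apply]
    exact Finset.sum_nonneg fun l _ => mul_nonneg (ih i l) (h0 l j)

lemma entry_abs_le_norm (A : Matrix ι ι ℝ) (i j : ι) : ‖A i j‖ ≤ ‖A‖ := by
  rw [Matrix.linfty_opNorm_def]
  have h1 : ‖A i j‖₊ ≤ ∑ j', ‖A i j'‖₊ :=
    Finset.single_le_sum (f := fun j' => ‖A i j'‖₊) (fun _ _ => zero_le) (Finset.mem_univ j)
  have h2 : (∑ j', ‖A i j'‖₊) ≤ (Finset.univ.sup fun i => ∑ j, ‖A i j‖₊) :=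
    Finset.le_sup (f := fun i => ∑ j, ‖A i j‖₊) (Finset.mem_univ i)
  exact_mod_cast h1.trans h2

lemma inv_one_sub_entry_nonneg {M : Matrix ι ι ℝ} (h0 : ∀ i j, 0 ≤ M i j)
    (h1 : ∀ i, ∑ j, M i j < 1) : ∀ i j, 0 ≤ (1 - M)⁻¹ i j := by
  have hn := norm_lt_one_of_rows h0 h1
  have : HasSummableGeomSeries (Matrix ι ι ℝ) :=
    @instHasSummableGeomSeriesOfCompleteSpace _ _ (Matrix.instCompleteSpace ι ι ℝ)
  have hs : HasSum (fun k : ℕ => M ^ k) (Ring.inverse (1 - M)) :=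
    hasSum_geom_series_inverse M hn
  intro i j
  rw [Matrix.nonsing_inv_eq_ringInverse]
  have heval : Continuous fun N : Matrix ι ι ℝ => N i j := by
    have : LipschitzWith 1 fun N : Matrix ι ι ℝ => N i j := by
      intro N N'
      simp only [ENNReal.coe_one, one_mul, edist_dist, dist_eq_norm]
      exact ENNReal.ofReal_le_ofReal (by simpa using entry_abs_le_norm (N - N') i j)
    exact this.continuous
  have hs' : HasSum (fun k : ℕ => (M ^ k) i j) ((Ring.inverse (1 - M)) i j) :=
    hs.map (AddMonoidHom.mk' (fun N : Matrix ι ι ℝ => N i j) (fun _ _ => rfl)) heval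
  exact hs'.nonneg fun k => pow_entry_nonneg h0 k i j

lemma isUnit_one_sub_rows {M : Matrix ι ι ℝ} (h0 : ∀ i j, 0 ≤ M i j)
    (h1 : ∀ i, ∑ j, M i j < 1) : IsUnit (1 - M) :=
  by have : HasSummableGeomSeries (Matrix ι ι ℝ) :=
       @instHasSummableGeomSeriesOfCompleteSpace _ _ (Matrix.instCompleteSpace ι ι ℝ)
     exact isUnit_one_sub_of_norm_lt_one (norm_lt_one_of_rows h0 h1)

end Neumann

lemma sum_ite_const {n : ℕ} (P : Fin n → Prop) (x : ℝ) :
    ∑ c, (if P c then x else 0) = ((univ.filter P).card : ℝ) * x := by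
  rw [← Finset.sum_filter, Finset.sum_const, nsmul_eq_mul]

lemma top_r {n : ℕ} (a b : Fin n) : (⊤ : Setoid (Fin n)).r a b := trivial

lemma bot_r {n : ℕ} (a b : Fin n) : (⊥ : Setoid (Fin n)).r a b ↔ a = b := Iff.rfl

lemma clusterCard_top {n : ℕ} (c : Fin n) : clusterCard (⊤ : Setoid (Fin n)) c = n := by
  simp [clusterCard, top_r]

lemma clusterCard_bot {n : ℕ} (c : Fin n) : clusterCard (⊥ : Setoid (Fin n)) c = 1 := by
  simp only [clusterCard, bot_r]
  have : (univ.filter fun c' => c = c') = {c} := by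
    ext d; simp [eq_comm]
  rw [this]; simp

lemma clusterCard_congr {n : ℕ} {Q : Setoid (Fin n)} {c c' : Fin n} (h : Q.r c c') :
    clusterCard Q c = clusterCard Q c' := by
  unfold clusterCard; congr 1; ext d
  simp only [Finset.mem_filter, Finset.mem_univ, true_and]
  exact ⟨fun h' => Q.trans (Q.symm h) h', fun h' => Q.trans h h'⟩

lemma clusterCard_pos {n : ℕ} (Q : Setoid (Fin n)) (c : Fin n) : 0 < clusterCard Q c := by
  refine Finset.card_pos.2 ⟨c, ?_⟩
  simp only [Finset.mem_filter, Finset.mem_univ, true_and]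
  exact Q.refl c

lemma card_filter_r {n : ℕ} (Q : Setoid (Fin n)) (c : Fin n) :
    (univ.filter fun c' => Q.r c' c).card = clusterCard Q c := by
  unfold clusterCard; congr 1; ext d
  simp only [Finset.mem_filter, Finset.mem_univ, true_and]
  exact ⟨fun h => Q.symm h, fun h => Q.symm h⟩

lemma AQ_nonneg {L n : ℕ} {B : Fin L → Fin L → ℝ} (hB : ∀ ℓ ℓ', 0 ≤ B ℓ ℓ')
    (Q : Setoid (Fin n)) (i j : Firm L n) : 0 ≤ AQ B Q i j := by
  unfold AQ
  simp only [Matrix.of_apply]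
  split
  · split
    · exact hB _ _
    · exact le_refl 0
  · split
    · exact div_nonneg (hB _ _) (Nat.cast_nonneg _)
    · exact le_refl 0

lemma AQ_row_sum {L n : ℕ} (hn : 1 ≤ n) (B : Fin L → Fin L → ℝ) (Q : Setoid (Fin n))
    (i : Firm L n) : ∑ j, AQ B Q i j = ∑ ℓ', B i.1 ℓ' := by
  rw [Fintype.sum_prod_type]
  have key : ∀ ℓ' : Fin L, ∑ c', AQ B Q i (ℓ', c') = B i.1 ℓ' := by
    intro ℓ'
    by_cases h : i.1 = ℓ'
    · subst h
      have : ∀ c', AQ B Q i (i.1, c') = if c' = i.2 then B i.1 i.1 else 0 := by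
        intro c'
        by_cases hc : c' = i.2
        · subst hc
          simp [AQ, Prod.ext_iff]
        · simp [AQ, Prod.ext_iff, hc, Ne.symm hc, eq_comm]
      simp only [this]
      rw [Finset.sum_ite_eq' univ i.2 (fun _ => B i.1 i.1)]
      simp
    · have : ∀ c', AQ B Q i (ℓ', c')
          = if Q.r i.2 c' then B i.1 ℓ' / (clusterCard Q i.2 : ℝ) else 0 := by
        intro c'
        simp only [AQ, Matrix.of_apply, if_neg h]
      simp only [this]
      rw [sum_ite_const]
      show ((clusterCard Q i.2 : ℝ)) * _ = _
      rw [mul_div_cancel₀]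
      exact Nat.cast_ne_zero.2 (clusterCard_pos Q i.2).ne'
  exact Finset.sum_congr rfl fun ℓ' _ => key ℓ'

lemma vecMul_one_sub {ι : Type*} [Fintype ι] [DecidableEq ι] (w : ι → ℝ)
    (M : Matrix ι ι ℝ) (j : ι) :
    (w ᵥ* (1 - M)) j = w j - ∑ i, w i * M i j := by
  simp only [Matrix.vecMul, dotProduct, Matrix.sub_apply, Matrix.one_apply, mul_sub,
    Finset.sum_sub_distrib, mul_ite, mul_one, mul_zero]
  rw [Finset.sum_ite_eq' univ j w]
  simp

lemma liftV_vecMul_AQ {L n : ℕ} (hn : 1 ≤ n) (B : Fin L → Fin L → ℝ) (Q : Setoid (Fin n))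
    (V : Fin L → ℝ) (j : Firm L n) :
    ((fun i : Firm L n => V i.1 / n) ᵥ* AQ B Q) j = (∑ ℓ, V ℓ * B ℓ j.1) / n := by
  obtain ⟨ℓj, cj⟩ := j
  simp only [Matrix.vecMul, dotProduct]
  rw [Fintype.sum_prod_type]
  have key : ∀ ℓ : Fin L, (∑ c, V (ℓ, c).1 / n * AQ B Q (ℓ, c) (ℓj, cj))
      = V ℓ * B ℓ ℓj / n := by
    intro ℓ
    by_cases h : ℓ = ℓj
    · subst h
      have h1 : ∀ c, V (ℓ, c).1 / n * AQ B Q (ℓ, c) (ℓ, cj)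
          = if c = cj then V ℓ / n * B ℓ ℓ else 0 := by
        intro c
        by_cases hc : c = cj
        · subst hc
          simp [AQ]
        · simp [AQ, Prod.ext_iff, hc]
      simp only [h1]
      rw [Finset.sum_ite_eq' univ cj (fun _ => V ℓ / n * B ℓ ℓ)]
      simp only [Finset.mem_univ, if_pos]
      ring
    · have h1 : ∀ c, V (ℓ, c).1 / n * AQ B Q (ℓ, c) (ℓj, cj)
          = if Q.r c cj then V ℓ / n * (B ℓ ℓj / (clusterCard Q cj : ℝ)) else 0 := by
        intro c
        have : AQ B Q (ℓ, c) (ℓj, cj)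
            = if Q.r c cj then B ℓ ℓj / (clusterCard Q c : ℝ) else 0 := by
          simp [AQ, h]
        rw [this]
        by_cases hq : Q.r c cj
        · rw [if_pos hq, if_pos hq, clusterCard_congr hq]
        · rw [if_neg hq, if_neg hq, mul_zero]
      simp only [h1]
      rw [sum_ite_const, card_filter_r]
      have hq0 : (clusterCard Q cj : ℝ) ≠ 0 :=
        Nat.cast_ne_zero.2 (clusterCard_pos Q cj).ne'
      field_simp
  rw [Finset.sum_congr rfl fun ℓ _ => key ℓ, Finset.sum_div]

section Model
variable {L n : ℕ}

def catV {L : ℕ} (a0 : Fin L → ℝ) (B : Fin L → Fin L → ℝ) : Fin L → ℝ :=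
  a0 ᵥ* (1 - Matrix.of B)⁻¹

variable {a0 b0 : Fin L → ℝ} {B : Fin L → Fin L → ℝ}

lemma Brow_lt_one (hb0 : ∀ ℓ, 0 < b0 ℓ) (hrow : ∀ ℓ, b0 ℓ + ∑ ℓ', B ℓ ℓ' ≤ 1) :
    ∀ ℓ, ∑ ℓ', Matrix.of B ℓ ℓ' < 1 := by
  intro ℓ
  have h := hrow ℓ
  have h2 := hb0 ℓ
  show (∑ ℓ', B ℓ ℓ') < 1
  linarith

lemma catV_nonneg (ha0 : ∀ ℓ, 0 < a0 ℓ) (hb0 : ∀ ℓ, 0 < b0 ℓ) (hB : ∀ ℓ ℓ', 0 ≤ B ℓ ℓ')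
    (hrow : ∀ ℓ, b0 ℓ + ∑ ℓ', B ℓ ℓ' ≤ 1) (ℓ : Fin L) : 0 ≤ catV a0 B ℓ := by
  unfold catV
  simp only [Matrix.vecMul, dotProduct]
  refine Finset.sum_nonneg fun ℓ' _ => mul_nonneg (ha0 ℓ').le ?_
  exact inv_one_sub_entry_nonneg (fun i j => hB i j) (Brow_lt_one hb0 hrow) ℓ' ℓ

lemma catV_solves (hb0 : ∀ ℓ, 0 < b0 ℓ) (hB : ∀ ℓ ℓ', 0 ≤ B ℓ ℓ')
    (hrow : ∀ ℓ, b0 ℓ + ∑ ℓ', B ℓ ℓ' ≤ 1) :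
    catV a0 B ᵥ* (1 - Matrix.of B) = a0 := by
  unfold catV
  rw [Matrix.vecMul_vecMul, Matrix.nonsing_inv_mul _ ?hdet, Matrix.vecMul_one]
  case hdet =>
    exact (Matrix.isUnit_iff_isUnit_det _).1
      (isUnit_one_sub_rows (fun i j => hB i j) (Brow_lt_one hb0 hrow))

lemma AQ_rows_lt_one (hn : 1 ≤ n) (hb0 : ∀ ℓ, 0 < b0 ℓ) (hrow : ∀ ℓ, b0 ℓ + ∑ ℓ', B ℓ ℓ' ≤ 1)
    (Q : Setoid (Fin n)) : ∀ i : Firm L n, ∑ j, AQ B Q i j < 1 := by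
  intro i
  rw [AQ_row_sum hn B Q i]
  linarith [hrow i.1, hb0 i.1]

lemma domar (hn : 1 ≤ n) (hb0 : ∀ ℓ, 0 < b0 ℓ) (hB : ∀ ℓ ℓ', 0 ≤ B ℓ ℓ')
    (hrow : ∀ ℓ, b0 ℓ + ∑ ℓ', B ℓ ℓ' ≤ 1) (Q : Setoid (Fin n)) :
    a0n n a0 ᵥ* (1 - AQ B Q)⁻¹ = fun i : Firm L n => catV a0 B i.1 / n := by
  have hunit : IsUnit (1 - AQ B Q) :=
    isUnit_one_sub_rows (AQ_nonneg hB Q) (AQ_rows_lt_one hn hb0 hrow Q)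
  have hsolve : ((fun i : Firm L n => catV a0 B i.1 / n) ᵥ* (1 - AQ B Q)) = a0n n a0 := by
    funext j
    rw [vecMul_one_sub]
    have h2 : (∑ i, catV a0 B i.1 / n * AQ B Q i j) = (∑ ℓ, catV a0 B ℓ * B ℓ j.1) / n :=
      liftV_vecMul_AQ hn B Q (catV a0 B) j
    rw [h2]
    have h3 : catV a0 B j.1 - ∑ ℓ, catV a0 B ℓ * B ℓ j.1 = a0 j.1 := by
      have := congrFun (catV_solves (a0 := a0) hb0 hB hrow) j.1
      rw [vecMul_one_sub] at this
      simpa using this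
    unfold a0n
    rw [div_sub_div_same, h3]
  calc a0n n a0 ᵥ* (1 - AQ B Q)⁻¹
      = ((fun i : Firm L n => catV a0 B i.1 / n) ᵥ* (1 - AQ B Q)) ᵥ* (1 - AQ B Q)⁻¹ := by
        rw [hsolve]
    _ = (fun i : Firm L n => catV a0 B i.1 / n) ᵥ* ((1 - AQ B Q) * (1 - AQ B Q)⁻¹) := by
        rw [Matrix.vecMul_vecMul]
    _ = fun i : Firm L n => catV a0 B i.1 / n := by
        rw [Matrix.mul_nonsing_inv _ ((Matrix.isUnit_iff_isUnit_det _).1 hunit),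
          Matrix.vecMul_one]

lemma WR_eq (hn : 1 ≤ n) (hb0 : ∀ ℓ, 0 < b0 ℓ) (hB : ∀ ℓ ℓ', 0 ≤ B ℓ ℓ')
    (hrow : ∀ ℓ, b0 ℓ + ∑ ℓ', B ℓ ℓ' ≤ 1) (lam : Fin L → (Firm L n → ℝ) → ℝ)
    (Q : Setoid (Fin n)) :
    WR a0 b0 lam (AQ B Q)
      = (fun i : Firm L n => catV a0 B i.1 / n) ⬝ᵥ uR lam b0 (AQ B Q) := by
  unfold WR
  rw [Matrix.dotProduct_mulVec, domar hn hb0 hB hrow Q]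

end Model

lemma factor_pos {t : ℝ} (ht : 0 ≤ t) : 0 < t ^ (-t) := by
  rcases eq_or_lt_of_le ht with h | h
  · rw [← h, neg_zero, Real.rpow_zero]; norm_num
  · exact Real.rpow_pos_of_pos h _

lemma lamBar_pos {L n : ℕ} {x : Firm L n → ℝ} (hx : ∀ j, 0 ≤ x j) : 0 < lamBar x :=
  Finset.prod_pos fun j _ => factor_pos (hx j)

lemma log_lamBar {L n : ℕ} {x : Firm L n → ℝ} (hx : ∀ j, 0 ≤ x j) :
    Real.log (lamBar x) = -∑ j, x j * Real.log (x j) := by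
  unfold lamBar
  rw [Real.log_prod fun j _ => (factor_pos (hx j)).ne']
  rw [← Finset.sum_neg_distrib]
  refine Finset.sum_congr rfl fun j _ => ?_
  rcases eq_or_lt_of_le (hx j) with h | h
  · rw [← h, neg_zero, Real.rpow_zero, Real.log_one, Real.log_zero]; ring
  · rw [Real.log_rpow h]; ring

lemma AQ_top_apply {L n : ℕ} (B : Fin L → Fin L → ℝ) (i : Firm L n) (ℓ' : Fin L) (c : Fin n)
    (h : i.1 ≠ ℓ') : AQ B (⊤ : Setoid (Fin n)) i (ℓ', c) = B i.1 ℓ' / n := by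
  simp [AQ, h, top_r, clusterCard_top]

lemma AQ_bot_apply {L n : ℕ} (B : Fin L → Fin L → ℝ) (i : Firm L n) (ℓ' : Fin L) (c : Fin n)
    (h : i.1 ≠ ℓ') : AQ B (⊥ : Setoid (Fin n)) i (ℓ', c)
      = if i.2 = c then B i.1 ℓ' else 0 := by
  simp only [AQ, Matrix.of_apply, if_neg h, bot_r, clusterCard_bot]
  split <;> simp

lemma entropy_sum_le {L n : ℕ} (hn : 1 ≤ n) {B : Fin L → Fin L → ℝ}
    (hB : ∀ ℓ ℓ', 0 ≤ B ℓ ℓ') (i : Firm L n) :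
    ∑ j, AQ B (⊤ : Setoid (Fin n)) i j * Real.log (AQ B (⊤ : Setoid (Fin n)) i j)
      ≤ ∑ j, AQ B (⊥ : Setoid (Fin n)) i j * Real.log (AQ B (⊥ : Setoid (Fin n)) i j) := by
  have hn0 : (0:ℝ) < n := by exact_mod_cast hn
  rw [Fintype.sum_prod_type, Fintype.sum_prod_type]
  refine Finset.sum_le_sum fun ℓ' _ => ?_
  by_cases h : i.1 = ℓ'
  · apply le_of_eq
    refine Finset.sum_congr rfl fun c _ => ?_
    have : AQ B (⊤ : Setoid (Fin n)) i (ℓ', c) = AQ B (⊥ : Setoid (Fin n)) i (ℓ', c) := by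
      simp [AQ, h]
    rw [this]
  · set b := B i.1 ℓ' with hb
    have hF : ∀ c : Fin n, AQ B (⊤ : Setoid (Fin n)) i (ℓ', c) = b / n :=
      fun c => AQ_top_apply B i ℓ' c h
    have hI : ∀ c : Fin n,
        AQ B (⊥ : Setoid (Fin n)) i (ℓ', c) * Real.log (AQ B (⊥ : Setoid (Fin n)) i (ℓ', c))
          = if i.2 = c then b * Real.log b else 0 := by
      intro c
      rw [AQ_bot_apply B i ℓ' c h]
      split <;> simp [hb]
    calc (∑ c : Fin n, AQ B (⊤ : Setoid (Fin n)) i (ℓ', c)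
            * Real.log (AQ B (⊤ : Setoid (Fin n)) i (ℓ', c)))
        = ∑ _c : Fin n, (b / n) * Real.log (b / n) := by
          refine Finset.sum_congr rfl fun c _ => ?_; rw [hF c]
      _ = b * Real.log (b / n) := by
          rw [Finset.sum_const, card_univ, Fintype.card_fin, nsmul_eq_mul]
          field_simp
      _ ≤ b * Real.log b := by
          rcases eq_or_lt_of_le (hB i.1 ℓ') with hb0 | hb0
          · rw [hb, ← hb0]; simp
          · refine mul_le_mul_of_nonneg_left ?_ hb0.le
            exact Real.log_le_log (div_pos hb0 hn0) (div_le_self hb0.le (by exact_mod_cast hn))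
      _ = ∑ c : Fin n, (if i.2 = c then b * Real.log b else 0) := by
          rw [Finset.sum_ite_eq univ i.2 (fun _ => b * Real.log b)]
          simp
      _ = _ := by
          refine Finset.sum_congr rfl fun c _ => (hI c).symm

lemma lamBar_bot_le_top {L n : ℕ} (hn : 1 ≤ n) {B : Fin L → Fin L → ℝ}
    (hB : ∀ ℓ ℓ', 0 ≤ B ℓ ℓ') (i : Firm L n) :
    lamBar (AQ B (⊥ : Setoid (Fin n)) i) ≤ lamBar (AQ B (⊤ : Setoid (Fin n)) i) := by
  have hFpos := lamBar_pos (fun j => AQ_nonneg hB (⊤ : Setoid (Fin n)) i j)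
  have hIpos := lamBar_pos (fun j => AQ_nonneg hB (⊥ : Setoid (Fin n)) i j)
  rw [← Real.exp_log hIpos, ← Real.exp_log hFpos]
  apply Real.exp_le_exp.2
  rw [log_lamBar (fun j => AQ_nonneg hB _ i j), log_lamBar (fun j => AQ_nonneg hB _ i j)]
  have := entropy_sum_le hn hB i
  linarith

theorem diversification_welfare_comparison
    (n L : ℕ) (hn : 1 ≤ n) (hL : 1 ≤ L)
    (a0 b0 : Fin L → ℝ) (B : Fin L → Fin L → ℝ)
    (ha0 : ∀ ℓ, 0 < a0 ℓ) (ha0sum : ∑ ℓ, a0 ℓ = 1)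
    (hb0 : ∀ ℓ, 0 < b0 ℓ) (hB : ∀ ℓ ℓ', 0 ≤ B ℓ ℓ')
    (hrow : ∀ ℓ, b0 ℓ + ∑ ℓ', B ℓ ℓ' ≤ 1)
    (lam : Fin L → (Firm L n → ℝ) → ℝ) (hlam : ∀ ℓ x, 0 < lam ℓ x) :
    ((∀ ℓ, IncRTD (lam ℓ)) →
      WR a0 b0 lam (AQ B (⊥ : Setoid (Fin n)))
        ≤ WR a0 b0 lam (AQ B (⊤ : Setoid (Fin n))))
    ∧ ((∀ ℓ, DecRTD (lam ℓ)) →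
      WR a0 b0 lam (AQ B (⊤ : Setoid (Fin n)))
        ≤ WR a0 b0 lam (AQ B (⊥ : Setoid (Fin n)))) := by
  have hxF : ∀ i : Firm L n, ∀ j, 0 ≤ AQ B (⊤ : Setoid (Fin n)) i j :=
    fun i j => AQ_nonneg hB _ i j
  have hxI : ∀ i : Firm L n, ∀ j, 0 ≤ AQ B (⊥ : Setoid (Fin n)) i j :=
    fun i j => AQ_nonneg hB _ i j
  have hV : ∀ i : Firm L n, 0 ≤ catV a0 B i.1 / n :=
    fun i => div_nonneg (catV_nonneg ha0 hb0 hB hrow i.1) (Nat.cast_nonneg n)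
  have hWF := WR_eq (a0 := a0) hn hb0 hB hrow lam (⊤ : Setoid (Fin n))
  have hWI := WR_eq (a0 := a0) hn hb0 hB hrow lam (⊥ : Setoid (Fin n))
  have hu : ∀ Q : Setoid (Fin n), ∀ i : Firm L n, uR lam b0 (AQ B Q) i
      = Real.log (lam i.1 (AQ B Q i)) - Real.log (lamBar (AQ B Q i))
        + b0 i.1 * Real.log (b0 i.1) := by
    intro Q i
    unfold uR
    have := log_lamBar (x := AQ B Q i) (fun j => AQ_nonneg hB Q i j)
    linarith [this]
  have hbar := fun i : Firm L n => lamBar_bot_le_top hn hB i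
  have hFpos := fun i : Firm L n => lamBar_pos (hxF i)
  have hIpos := fun i : Firm L n => lamBar_pos (hxI i)
  constructor
  · intro hInc
    rw [hWF, hWI]
    unfold dotProduct
    refine Finset.sum_le_sum fun i _ => mul_le_mul_of_nonneg_left ?_ (hV i)
    rw [hu (⊥ : Setoid (Fin n)) i, hu (⊤ : Setoid (Fin n)) i]
    have hratio := hInc i.1 (AQ B (⊤ : Setoid (Fin n)) i) (AQ B (⊥ : Setoid (Fin n)) i)
      (hxF i) (hxI i) (hbar i)
    have hlF := hlam i.1 (AQ B (⊤ : Setoid (Fin n)) i)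
    have hlI := hlam i.1 (AQ B (⊥ : Setoid (Fin n)) i)
    have hlog := Real.log_le_log (div_pos (hFpos i) (hIpos i)) hratio
    rw [Real.log_div (hFpos i).ne' (hIpos i).ne', Real.log_div hlF.ne' hlI.ne'] at hlog
    linarith
  · intro hDec
    rw [hWF, hWI]
    unfold dotProduct
    refine Finset.sum_le_sum fun i _ => mul_le_mul_of_nonneg_left ?_ (hV i)
    rw [hu (⊥ : Setoid (Fin n)) i, hu (⊤ : Setoid (Fin n)) i]
    have hratio := hDec i.1 (AQ B (⊤ : Setoid (Fin n)) i) (AQ B (⊥ : Setoid (Fin n)) i)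
      (hxF i) (hxI i) (hbar i)
    have hlF := hlam i.1 (AQ B (⊤ : Setoid (Fin n)) i)
    have hlI := hlam i.1 (AQ B (⊥ : Setoid (Fin n)) i)
    have hlog := Real.log_le_log (div_pos hlF hlI) hratio
    rw [Real.log_div (hFpos i).ne' (hIpos i).ne', Real.log_div hlF.ne' hlI.ne'] at hlog
    linarith

end
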